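/- Let Γ be a finite directed graph, let w be a directed path in Γ, and let L = ↑{(w,w)} be the closed inverse subsemigroup of finite chain type with minimal element (w,w). If L has finite index in S(Γ), then [S(Γ):L] = Σ_{v ∈ V(w)} N^Γ_{v,w}, the sum over all vertices v lying on w of the number of directed paths in Γ with initial vertex v whose first edge is not an edge of w. -/

import Mathlib

/-- A (finite) directed graph: vertices, edges, and source/target maps. -/
structure DGraph where
  V : Type
  E : Type
  src : E → V
  tgt : E → V

namespace DGraph

/-- The vertex reached after traversing a list of edges from a vertex. -/
def walkEnd (G : DGraph) : G.V → List G.E → G.V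
  | v, [] => v
  | _, e :: l => walkEnd G (G.tgt e) l

/-- The list of edges forms a directed walk starting at the given vertex. -/
def IsWalk (G : DGraph) : G.V → List G.E → Prop
  | _, [] => True
  | v, e :: l => G.src e = v ∧ IsWalk G (G.tgt e) l

variable (G : DGraph)

@[simp] theorem walkEnd_nil (v : G.V) : G.walkEnd v [] = v := rfl
@[simp] theorem walkEnd_cons (v : G.V) (e : G.E) (l : List G.E) :
    G.walkEnd v (e :: l) = G.walkEnd (G.tgt e) l := rfl
@[simp] theorem isWalk_nil (v : G.V) : G.IsWalk v [] := trivial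
@[simp] theorem isWalk_cons (v : G.V) (e : G.E) (l : List G.E) :
    G.IsWalk v (e :: l) ↔ G.src e = v ∧ G.IsWalk (G.tgt e) l := Iff.rfl

theorem isWalk_append (v : G.V) (l1 l2 : List G.E) :
    G.IsWalk v (l1 ++ l2) ↔ G.IsWalk v l1 ∧ G.IsWalk (G.walkEnd v l1) l2 := by
  induction l1 generalizing v with
  | nil => simp [IsWalk, walkEnd]
  | cons e l ih => simp [IsWalk, walkEnd, ih, and_assoc]

/-- A directed path in `G`: an initial vertex together with a compatible
list of edges, traversed in order (empty paths are allowed). -/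
structure DPath (G : DGraph) where
  first : G.V
  edges : List G.E
  wf : G.IsWalk first edges

namespace DPath

variable {G}

/-- The terminal vertex of a directed path. -/
def last (p : G.DPath) : G.V := G.walkEnd p.first p.edges

/-- The list of vertices lying on a directed path. -/
def vertexList (p : G.DPath) : List G.V := p.first :: p.edges.map G.tgt

/-- `q` is a suffix (terminal segment) of `p`: `p = l ⬝ q` for some edge list `l`. -/
def IsSuffixOf (q p : G.DPath) : Prop :=
  ∃ l : List G.E, p.edges = l ++ q.edges ∧ q.first = G.walkEnd p.first l

end DPath

theorem isWalk_chopAppend {u v w : G.DPath} (hs : v.IsSuffixOf u) (hvw : v.first = w.first) :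
    G.IsWalk u.first (u.edges.take (u.edges.length - v.edges.length) ++ w.edges) := by
  obtain ⟨l, hl, hfst⟩ := hs
  rw [hl]
  have hlen : (l ++ v.edges).length - v.edges.length = l.length := by simp
  rw [hlen, List.take_left, G.isWalk_append]
  have hu := u.wf
  rw [hl, G.isWalk_append] at hu
  refine ⟨hu.1, ?_⟩
  rw [← hfst, hvw]
  exact w.wf

theorem isWalk_concat {p q : G.DPath} (h : q.first = p.last) :
    G.IsWalk p.first (p.edges ++ q.edges) := by
  rw [G.isWalk_append]
  refine ⟨p.wf, ?_⟩
  show G.IsWalk p.last q.edges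
  rw [← h]
  exact q.wf

/-- Concatenation of composable directed paths. -/
def concatPath (p q : G.DPath) (h : q.first = p.last) : G.DPath :=
  ⟨p.first, p.edges ++ q.edges, G.isWalk_concat h⟩

theorem isWalk_replicate (a : G.E) (h : G.tgt a = G.src a) (m : ℕ) :
    G.IsWalk (G.src a) (List.replicate m a) := by
  induction m with
  | zero => trivial
  | succ n ih => rw [List.replicate_succ, G.isWalk_cons]; exact ⟨rfl, by rw [h]; exact ih⟩

/-- The path traversing a loop `a` exactly `m` times. -/
def loopPow (a : G.E) (h : G.tgt a = G.src a) (m : ℕ) : G.DPath :=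
  ⟨G.src a, List.replicate m a, G.isWalk_replicate a h m⟩

/-- `p` is a nonempty directed circuit. -/
def IsCircuit (p : G.DPath) : Prop := p.edges ≠ [] ∧ p.last = p.first

/-- `p` and `d` share no nontrivial common prefix (initial segment). -/
def NoCommonPrefix (p d : G.DPath) : Prop :=
  ∀ l : List G.E, l ≠ [] → l <+: p.edges → ¬ l <+: d.edges

end DGraph

/-- The underlying set of the graph inverse semigroup `S(Γ)`: pairs of directed
paths with the same initial vertex, together with a zero element. -/
inductive GIS (G : DGraph) where
  | zero : GIS G
  | pair (a b : G.DPath) (h : a.first = b.first) : GIS G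

namespace GIS

open scoped Classical in
/-- The multiplication of the graph inverse semigroup:
`(t,u)(v,w) = (t,pw)` if `u = pv`, `(pt,w)` if `v = pu`, and `0` otherwise. -/
noncomputable def mul {G : DGraph} : GIS G → GIS G → GIS G
  | .zero, _ => .zero
  | .pair _ _ _, .zero => .zero
  | .pair t u h1, .pair v w h2 =>
    if hs : v.IsSuffixOf u then
      .pair t ⟨t.first, u.edges.take (u.edges.length - v.edges.length) ++ w.edges,
        by rw [h1]; exact G.isWalk_chopAppend hs h2⟩ rfl
    else if hs' : u.IsSuffixOf v then
      .pair ⟨v.first, v.edges.take (v.edges.length - u.edges.length) ++ t.edges,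
        G.isWalk_chopAppend hs' h1.symm⟩ w h2
    else .zero

noncomputable instance {G : DGraph} : Mul (GIS G) := ⟨GIS.mul⟩

/-- The inverse: `(v,w)⁻¹ = (w,v)` and `0⁻¹ = 0`. -/
def inv {G : DGraph} : GIS G → GIS G
  | .zero => .zero
  | .pair a b h => .pair b a h.symm

/-- The natural partial order: `x ≤ y` iff `x = e * y` for some idempotent `e`. -/
def le {G : DGraph} (x y : GIS G) : Prop := ∃ e : GIS G, e * e = e ∧ x = e * y

end GIS

/-- `L` is a closed inverse subsemigroup of `S(Γ)`: a nonempty subset closed under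
multiplication, inverses, and upward closed in the natural partial order. -/
def IsCISS (G : DGraph) (L : Set (GIS G)) : Prop :=
  L.Nonempty ∧ (∀ a ∈ L, ∀ b ∈ L, a * b ∈ L) ∧ (∀ a ∈ L, a.inv ∈ L) ∧
    (∀ a ∈ L, ∀ s : GIS G, GIS.le a s → s ∈ L)

/-- The closed inverse subsemigroup `↑{(u,u)}` of (finite) chain type:
all `(q,q)` with `q` a suffix of `u`. -/
def chainSet (G : DGraph) (u : G.DPath) : Set (GIS G) :=
  {x | ∃ q : G.DPath, q.IsSuffixOf u ∧ x = GIS.pair q q rfl}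

/-- The edge list of the `r`-th power of the path `p`. -/
def powEdges {G : DGraph} (p : G.DPath) (r : ℕ) : List G.E :=
  (List.replicate r p.edges).flatten

/-- The closed inverse subsemigroup of cycle type
`L_{p,d} = {(v p^r d, v p^s d) : r,s ≥ 0, v a suffix of p} ∪ {(q,q) : q a suffix of d}`. -/
def cycleSet (G : DGraph) (p d : G.DPath) : Set (GIS G) :=
  {x | (∃ (r s : ℕ) (v a b : G.DPath) (h : a.first = b.first),
          v.IsSuffixOf p ∧ x = GIS.pair a b h ∧
          a.first = v.first ∧ a.edges = v.edges ++ powEdges p r ++ d.edges ∧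
          b.first = v.first ∧ b.edges = v.edges ++ powEdges p s ++ d.edges) ∨
       (∃ q : G.DPath, q.IsSuffixOf d ∧ x = GIS.pair q q rfl)}

/-- `L` is a chain of idempotents: all elements are idempotent and any two are
comparable in the natural partial order. -/
def IsChainOfIdem (G : DGraph) (L : Set (GIS G)) : Prop :=
  (∀ x ∈ L, x * x = x) ∧ ∀ x ∈ L, ∀ y ∈ L, GIS.le x y ∨ GIS.le y x

/-- The set of right cosets `↑(Lt)` (for `t` with `t t⁻¹ ∈ L`) of a closed inverse
subsemigroup `L`. -/
def cosets (G : DGraph) (L : Set (GIS G)) : Set (Set (GIS G)) :=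
  {C | ∃ t : GIS G, t * t.inv ∈ L ∧ C = {s | ∃ x ∈ L, GIS.le (x * t) s}}

/-- `H` and `K` are conjugate: for some `s`, `s⁻¹Hs ⊆ K` and `sKs⁻¹ ⊆ H`. -/
def Conjugate (G : DGraph) (H K : Set (GIS G)) : Prop :=
  ∃ s : GIS G, (∀ h ∈ H, s.inv * h * s ∈ K) ∧ (∀ k ∈ K, s * k * s.inv ∈ H)

/-- The set of directed paths with initial vertex `v` whose first edge (if any)
is not an edge of `w`. -/
def Npaths (G : DGraph) (v : G.V) (w : G.DPath) : Set G.DPath :=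
  {t | t.first = v ∧ ∀ e, t.edges.head? = some e → e ∉ w.edges}

section Aux

open DGraph

variable {G : DGraph}

theorem walkEnd_app (v : G.V) (l1 l2 : List G.E) :
    G.walkEnd v (l1 ++ l2) = G.walkEnd (G.walkEnd v l1) l2 := by
  induction l1 generalizing v with
  | nil => rfl
  | cons e l ih => simp [ih]

theorem dpath_ext {p q : G.DPath} (h1 : p.first = q.first) (h2 : p.edges = q.edges) : p = q := by
  cases p; cases q
  simp only at h1 h2
  subst h1; subst h2; rfl

theorem pair_congr {a b a' b' : G.DPath} (ha : a = a') (hb : b = b')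
    (h : a.first = b.first) (h' : a'.first = b'.first) :
    GIS.pair a b h = GIS.pair a' b' h' := by
  subst ha; subst hb; rfl

theorem take_sub {α : Type} {x l c : List α} (h : x = l ++ c) :
    x.take (x.length - c.length) = l := by
  subst h
  simp [List.take_left]

theorem suffix_refl (p : G.DPath) : p.IsSuffixOf p := ⟨[], rfl, rfl⟩

theorem mul_pair_eq {t u v z : G.DPath} (h1 : t.first = u.first) (h2 : v.first = z.first)
    (hs : v.IsSuffixOf u) :
    (GIS.pair t u h1) * (GIS.pair v z h2) =
      GIS.pair t ⟨t.first, u.edges.take (u.edges.length - v.edges.length) ++ z.edges,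
        by rw [h1]; exact G.isWalk_chopAppend hs h2⟩ rfl := by
  show GIS.mul _ _ = _
  simp only [GIS.mul]
  rw [dif_pos hs]

theorem mul_pair_of_suffix {t u v z : G.DPath} (h1 : t.first = u.first) (h2 : v.first = z.first)
    (hs : v.IsSuffixOf u) (c : G.DPath) (hcf : t.first = c.first)
    (hce : c.edges = u.edges.take (u.edges.length - v.edges.length) ++ z.edges) :
    (GIS.pair t u h1) * (GIS.pair v z h2) = GIS.pair t c hcf := by
  rw [mul_pair_eq h1 h2 hs]
  refine pair_congr rfl ?_ _ _
  refine dpath_ext ?_ ?_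
  · exact hcf
  · exact hce.symm

theorem mul_pair_eq' {t u v z : G.DPath} (h1 : t.first = u.first) (h2 : v.first = z.first)
    (hns : ¬ v.IsSuffixOf u) (hs : u.IsSuffixOf v) :
    (GIS.pair t u h1) * (GIS.pair v z h2) =
      GIS.pair ⟨v.first, v.edges.take (v.edges.length - u.edges.length) ++ t.edges,
        G.isWalk_chopAppend hs h1.symm⟩ z h2 := by
  show GIS.mul _ _ = _
  simp only [GIS.mul]
  rw [dif_neg hns, dif_pos hs]

theorem mul_pair_of_suffix' {t u v z : G.DPath} (h1 : t.first = u.first) (h2 : v.first = z.first)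
    (hns : ¬ v.IsSuffixOf u) (hs : u.IsSuffixOf v) (c : G.DPath) (hcf : v.first = c.first)
    (hce : c.edges = v.edges.take (v.edges.length - u.edges.length) ++ t.edges)
    (hcz : c.first = z.first) :
    (GIS.pair t u h1) * (GIS.pair v z h2) = GIS.pair c z hcz := by
  rw [mul_pair_eq' h1 h2 hns hs]
  refine pair_congr ?_ rfl _ _
  refine (dpath_ext ?_ ?_ : c = _).symm
  · exact hcf.symm
  · exact hce

theorem mul_pair_of_none {t u v z : G.DPath} (h1 : t.first = u.first) (h2 : v.first = z.first)
    (hns : ¬ v.IsSuffixOf u) (hns' : ¬ u.IsSuffixOf v) :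
    (GIS.pair t u h1) * (GIS.pair v z h2) = GIS.zero := by
  show GIS.mul _ _ = _
  simp only [GIS.mul]
  rw [dif_neg hns, dif_neg hns']

theorem gis_zero_mul (y : GIS G) : GIS.zero * y = GIS.zero := rfl

theorem gis_mul_zero (x : GIS G) : x * GIS.zero = GIS.zero := by cases x <;> rfl

theorem pair_idem (q : G.DPath) : GIS.pair q q rfl * GIS.pair q q rfl = GIS.pair q q rfl := by
  apply mul_pair_of_suffix _ _ (suffix_refl q) q rfl
  simp

theorem idem_pair {q r : G.DPath} {h : q.first = r.first}
    (he : GIS.pair q r h * GIS.pair q r h = GIS.pair q r h) : q = r := by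
  by_cases hs : q.IsSuffixOf r
  · obtain ⟨l, hl, hl2⟩ := hs
    rw [mul_pair_eq h h ⟨l, hl, hl2⟩] at he
    injection he with h1 h2
    have h3 := congrArg DPath.edges h2
    simp only at h3
    rw [take_sub hl] at h3
    have h4 : l = [] := by
      have := congrArg List.length h3
      simpa using this
    subst h4
    exact dpath_ext h (by simpa using hl.symm)
  · by_cases hs' : r.IsSuffixOf q
    · obtain ⟨l, hl, hl2⟩ := hs'
      rw [mul_pair_eq' h h hs ⟨l, hl, hl2⟩] at he
      injection he with h1 h2
      have h3 := congrArg DPath.edges h1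
      simp only at h3
      rw [take_sub hl] at h3
      have h4 : l = [] := by
        have := congrArg List.length h3
        simpa using this
      subst h4
      exact dpath_ext h (by simpa using hl)
    · rw [mul_pair_of_none h h hs hs'] at he
      exact absurd he (by simp)

end Aux

section Aux2

open DGraph

variable {G : DGraph}

/-- Characterization of the natural partial order below a pair. -/
theorem le_pair_iff {a b : G.DPath} {h : a.first = b.first} {s : GIS G} :
    GIS.le (GIS.pair a b h) s ↔
      ∃ (c d : G.DPath) (h' : c.first = d.first) (l : List G.E),
        s = GIS.pair c d h' ∧ a.edges = l ++ c.edges ∧ b.edges = l ++ d.edges ∧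
          G.walkEnd a.first l = c.first := by
  constructor
  · rintro ⟨e, he, hx⟩
    cases e with
    | zero => rw [gis_zero_mul] at hx; exact absurd hx (by simp)
    | pair q r hqr =>
      obtain rfl := idem_pair he
      cases s with
      | zero => rw [gis_mul_zero] at hx; exact absurd hx (by simp)
      | pair c d h' =>
        by_cases hs : c.IsSuffixOf q
        · obtain ⟨l, hl, hl2⟩ := hs
          rw [mul_pair_eq hqr h' ⟨l, hl, hl2⟩] at hx
          injection hx with h1 h2
          subst h1
          have h3 := congrArg DPath.edges h2
          simp only at h3
          rw [take_sub hl] at h3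
          exact ⟨c, d, h', l, rfl, hl, h3, hl2.symm⟩
        · by_cases hs' : q.IsSuffixOf c
          · obtain ⟨m, hm, hm2⟩ := hs'
            rw [mul_pair_of_suffix' hqr h' hs ⟨m, hm, hm2⟩ c rfl (by rw [take_sub hm, hm]) h'] at hx
            injection hx with h1 h2
            exact ⟨c, d, h', [], rfl, by rw [h1]; rfl, by rw [h2]; rfl, by rw [h1]; rfl⟩
          · rw [mul_pair_of_none hqr h' hs hs'] at hx
            exact absurd hx (by simp)
  · rintro ⟨c, d, h', l, rfl, he1, he2, he3⟩
    refine ⟨GIS.pair a a rfl, pair_idem a, ?_⟩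
    rw [mul_pair_of_suffix rfl h' ⟨l, he1, he3.symm⟩ b h (by rw [take_sub he1, he2])]

theorem suffix_comparable {a q w : G.DPath} (ha : a.IsSuffixOf w) (hq : q.IsSuffixOf w) :
    a.IsSuffixOf q ∨ q.IsSuffixOf a := by
  obtain ⟨l1, hl1, hf1⟩ := ha
  obtain ⟨l2, hl2, hf2⟩ := hq
  rcases List.suffix_or_suffix_of_suffix ⟨l1, hl1.symm⟩ ⟨l2, hl2.symm⟩ with ⟨m, hm⟩ | ⟨m, hm⟩
  · left
    refine ⟨m, hm.symm, ?_⟩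
    have hl : l1 = l2 ++ m := by
      apply List.append_cancel_right (bs := a.edges)
      rw [← hl1, hl2, ← hm, List.append_assoc]
    rw [hf1, hl, walkEnd_app, ← hf2]
  · right
    refine ⟨m, hm.symm, ?_⟩
    have hl : l2 = l1 ++ m := by
      apply List.append_cancel_right (bs := q.edges)
      rw [← hl2, hl1, ← hm, List.append_assoc]
    rw [hf2, hl, walkEnd_app, ← hf1]

end Aux2

section Aux3

open DGraph

variable {G : DGraph}

/-- The canonical path attached to a coset representative. -/
def chopPath (w a b : G.DPath) (ha : a.IsSuffixOf w) (h : a.first = b.first) : G.DPath :=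
  ⟨w.first, w.edges.take (w.edges.length - a.edges.length) ++ b.edges,
    G.isWalk_chopAppend ha h⟩

/-- The principal up-set attached to a path `c` with `c.first = w.first`. -/
def FF (w c : G.DPath) : Set (GIS G) :=
  {s | ∃ h : w.first = c.first, GIS.le (GIS.pair w c h) s}

theorem cosetEq (w a b : G.DPath) (h : a.first = b.first) (ha : a.IsSuffixOf w) :
    {s | ∃ x ∈ chainSet G w, GIS.le (x * GIS.pair a b h) s} = FF w (chopPath w a b ha h) := by
  ext s
  constructor
  · rintro ⟨x, hx, hle⟩
    obtain ⟨q, hq, rfl⟩ := hx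
    by_cases hs : a.IsSuffixOf q
    · obtain ⟨l1, hq1, hq2⟩ := hq
      obtain ⟨l', hs1, hs2⟩ := hs
      rw [mul_pair_eq rfl h ⟨l', hs1, hs2⟩] at hle
      rw [le_pair_iff] at hle
      obtain ⟨γ, δ, h'', m, rfl, k1, k2, k3⟩ := hle
      simp only [take_sub hs1] at k2
      refine ⟨rfl, ?_⟩
      apply le_pair_iff.mpr
      refine ⟨γ, δ, h'', (l1 ++ m), rfl, ?_, ?_, ?_⟩
      · rw [hq1, k1, List.append_assoc]
      · show w.edges.take (w.edges.length - a.edges.length) ++ b.edges = _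
        have e1 : w.edges.take (w.edges.length - a.edges.length) = l1 ++ l' := by
          apply take_sub
          rw [hq1, hs1, List.append_assoc]
        rw [e1, List.append_assoc, k2, ← List.append_assoc]
      · show G.walkEnd w.first (l1 ++ m) = γ.first
        rw [walkEnd_app, ← hq2, k3]
    · have hs' : q.IsSuffixOf a := (suffix_comparable ha hq).resolve_left hs
      obtain ⟨l', hs1, hs2⟩ := hs'
      rw [mul_pair_of_suffix' rfl h hs ⟨l', hs1, hs2⟩ a rfl
        (by rw [take_sub hs1]; exact hs1) h] at hle
      rw [le_pair_iff] at hle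
      obtain ⟨γ, δ, h'', m, rfl, k1, k2, k3⟩ := hle
      obtain ⟨l2, ha1, ha2⟩ := ha
      refine ⟨rfl, ?_⟩
      apply le_pair_iff.mpr
      refine ⟨γ, δ, h'', (l2 ++ m), rfl, ?_, ?_, ?_⟩
      · rw [ha1, k1, List.append_assoc]
      · show w.edges.take (w.edges.length - a.edges.length) ++ b.edges = _
        rw [take_sub ha1, k2, ← List.append_assoc]
      · show G.walkEnd w.first (l2 ++ m) = γ.first
        rw [walkEnd_app, ← ha2, k3]
  · rintro ⟨h', hle⟩
    refine ⟨GIS.pair w w rfl, ⟨w, suffix_refl w, rfl⟩, ?_⟩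
    rw [mul_pair_of_suffix rfl h ha (chopPath w a b ha h) rfl rfl]
    exact hle

theorem cosets_eq (w : G.DPath) :
    cosets G (chainSet G w) = FF w '' {c : G.DPath | c.first = w.first} := by
  ext C
  constructor
  · rintro ⟨t, ht, rfl⟩
    cases t with
    | zero =>
      obtain ⟨q, _, hq⟩ := ht
      rw [gis_zero_mul] at hq; exact absurd hq (by simp)
    | pair a b h =>
      have hinv : (GIS.pair a b h).inv = GIS.pair b a h.symm := rfl
      rw [hinv, mul_pair_of_suffix h h.symm (suffix_refl b) a rfl (by simp)] at ht
      obtain ⟨q, hq, hq2⟩ := ht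
      injection hq2 with e1 e2
      subst e1
      have ha : a.IsSuffixOf w := hq
      exact ⟨chopPath w a b ha h, rfl, (cosetEq w a b h ha).symm⟩
  · rintro ⟨c, hc, rfl⟩
    refine ⟨GIS.pair w c hc.symm, ?_, ?_⟩
    · rw [show (GIS.pair w c hc.symm).inv = GIS.pair c w hc from rfl,
        mul_pair_of_suffix hc.symm hc (suffix_refl c) w rfl (by simp)]
      exact ⟨w, suffix_refl w, rfl⟩
    · rw [cosetEq w w c hc.symm (suffix_refl w)]
      have hch : chopPath w w c (suffix_refl w) hc.symm = c := by
        refine dpath_ext ?_ ?_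
        · exact hc.symm
        · show w.edges.take (w.edges.length - w.edges.length) ++ c.edges = c.edges
          simp
      rw [hch]
  
theorem FF_injOn (w : G.DPath) :
    Set.InjOn (FF w) {c : G.DPath | c.first = w.first} := by
  intro c1 hc1 c2 hc2 hF
  have hmem : GIS.pair w c1 hc1.symm ∈ FF w c1 := by
    refine ⟨hc1.symm, ?_⟩
    rw [le_pair_iff]
    exact ⟨w, c1, hc1.symm, [], rfl, rfl, rfl, rfl⟩
  rw [hF] at hmem
  obtain ⟨h', hle⟩ := hmem
  rw [le_pair_iff] at hle
  obtain ⟨γ, δ, h'', m, heq, k1, k2, k3⟩ := hle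
  injection heq with e1 e2
  subst e1; subst e2
  have hm : m = [] := by
    have := congrArg List.length k1
    simpa using this
  subst hm
  exact dpath_ext (hc1.trans hc2.symm) (by simpa using k2.symm)

end Aux3

section Aux4

open DGraph

variable {G : DGraph}

theorem isWalk_take {v : G.V} {l : List G.E} (h : G.IsWalk v l) (k : ℕ) :
    G.IsWalk v (l.take k) := by
  rw [← List.take_append_drop k l, G.isWalk_append] at h
  exact h.1

theorem src_getElem {v : G.V} {l : List G.E} (h : G.IsWalk v l) (k : ℕ) (hk : k < l.length) :
    G.src l[k] = G.walkEnd v (l.take k) := by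
  induction l generalizing v k with
  | nil => simp at hk
  | cons e l ih =>
    rcases h with ⟨h1, h2⟩
    cases k with
    | zero => simpa using h1
    | succ k => simpa using ih h2 k (by simpa using hk)

theorem getD_cons_map {l : List G.E} {v : G.V} : ∀ (k : ℕ), k ≤ l.length → ∀ d : G.V,
    (v :: l.map G.tgt).getD k d = G.walkEnd v (l.take k) := by
  induction l generalizing v with
  | nil =>
    intro k hk d
    obtain rfl : k = 0 := by simpa using hk
    rfl
  | cons e l ih =>
    intro k hk d
    cases k with
    | zero => rfl
    | succ k =>
      simp only [List.map_cons, List.getD_cons_succ, List.take_succ_cons, G.walkEnd_cons]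
      exact ih k (by simpa using hk) d

theorem vertexList_getD (w : G.DPath) (k : ℕ) (hk : k ≤ w.edges.length) :
    w.vertexList.getD k w.first = G.walkEnd w.first (w.edges.take k) :=
  getD_cons_map k hk w.first

theorem vertexList_length (w : G.DPath) : w.vertexList.length = w.edges.length + 1 := by
  simp [DPath.vertexList]

/-- Powers of a closed segment stay walks. -/
theorem rep_facts {v : G.V} {seg : List G.E} (hw : G.IsWalk v seg) (he : G.walkEnd v seg = v) :
    ∀ m : ℕ, G.IsWalk v (List.replicate m seg).flatten ∧
      G.walkEnd v (List.replicate m seg).flatten = v ∧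
      (List.replicate m seg).flatten.length = m * seg.length := by
  intro m
  induction m with
  | zero => exact ⟨trivial, rfl, by simp⟩
  | succ m ih =>
    rw [List.replicate_succ, List.flatten_cons]
    refine ⟨?_, ?_, ?_⟩
    · rw [G.isWalk_append]
      exact ⟨hw, by rw [he]; exact ih.1⟩
    · rw [walkEnd_app, he, ih.2.1]
    · simp only [List.length_append, ih.2.2]
      ring

theorem nodup_of_finite (w : G.DPath)
    (hPL : {l : List G.E | G.IsWalk w.first l}.Finite) : w.vertexList.Nodup := by
  by_contra hnd
  rw [List.nodup_iff_injective_get] at hnd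
  obtain ⟨i, j, hij, hne⟩ := Function.not_injective_iff.mp hnd
  wlog hlt : (i : ℕ) < (j : ℕ) generalizing i j
  · have hlt' : (j : ℕ) < (i : ℕ) := by
      rcases Nat.lt_trichotomy (i : ℕ) (j : ℕ) with h | h | h
      · exact absurd h hlt
      · exact absurd (Fin.ext h) hne
      · exact h
    exact this j i hij.symm (Ne.symm hne) hlt'
  clear hne
  have hjlen : (j : ℕ) ≤ w.edges.length := by
    have h1 := j.isLt
    have h2 := vertexList_length w
    omega
  have hvl : ∀ (k : ℕ) (h : k < w.vertexList.length),
      w.vertexList.get ⟨k, h⟩ = G.walkEnd w.first (w.edges.take k) := by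
    intro k h
    rw [← List.getD_eq_get _ w.first ⟨k, h⟩]
    exact vertexList_getD w k (by rw [vertexList_length] at h; omega)
  have hij' : G.walkEnd w.first (w.edges.take (i : ℕ)) =
      G.walkEnd w.first (w.edges.take (j : ℕ)) := by
    rw [← hvl i i.isLt, ← hvl j j.isLt]
    simpa using hij
  set seg := (w.edges.take (j : ℕ)).drop (i : ℕ) with hseg
  have hsplit : w.edges.take (j : ℕ) = w.edges.take (i : ℕ) ++ seg := by
    rw [hseg]
    nth_rewrite 1 [← List.take_append_drop (i : ℕ) (w.edges.take (j : ℕ))]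
    rw [List.take_take, min_eq_left (le_of_lt hlt)]
  have hseglen : seg.length = (j : ℕ) - (i : ℕ) := by
    rw [hseg]
    simp [List.length_take, min_eq_left hjlen]
  have hwj : G.IsWalk w.first (w.edges.take (j : ℕ)) := isWalk_take w.wf _
  rw [hsplit, G.isWalk_append] at hwj
  have hsw : G.IsWalk (G.walkEnd w.first (w.edges.take (i : ℕ))) seg := hwj.2
  have hse : G.walkEnd (G.walkEnd w.first (w.edges.take (i : ℕ))) seg
      = G.walkEnd w.first (w.edges.take (i : ℕ)) := by
    rw [← walkEnd_app, ← hsplit, ← hij']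
  have hmem : ∀ m : ℕ, w.edges.take (i : ℕ) ++ (List.replicate m seg).flatten
      ∈ {l : List G.E | G.IsWalk w.first l} := by
    intro m
    rw [Set.mem_setOf_eq, G.isWalk_append]
    exact ⟨isWalk_take w.wf _, (rep_facts hsw hse m).1⟩
  have hinj : Function.Injective
      (fun m : ℕ => w.edges.take (i : ℕ) ++ (List.replicate m seg).flatten) := by
    intro m m' h
    have := congrArg List.length h
    simp only [List.length_append, (rep_facts hsw hse m).2.2, (rep_facts hsw hse m').2.2] at this
    have hpos : 0 < seg.length := by omega
    exact Nat.eq_of_mul_eq_mul_right hpos (by omega)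
  exact (Set.infinite_of_injective_forall_mem hinj hmem) hPL

theorem ncard_biUnion_range {α : Type} (n : ℕ) (f : ℕ → Set α)
    (hfin : ∀ i ∈ Finset.range n, (f i).Finite)
    (hdisj : ∀ i ∈ Finset.range n, ∀ j ∈ Finset.range n, i ≠ j → Disjoint (f i) (f j)) :
    (⋃ i ∈ Finset.range n, f i).ncard = ∑ i ∈ Finset.range n, (f i).ncard := by
  induction n with
  | zero => simp
  | succ n ih =>
    rw [Finset.sum_range_succ]
    have hrr : ∀ i ∈ Finset.range n, i ∈ Finset.range (n+1) := by
      intro i hi; rw [Finset.mem_range] at hi ⊢; omega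
    have hcup : (⋃ i ∈ Finset.range (n+1), f i) = (⋃ i ∈ Finset.range n, f i) ∪ f n := by
      rw [Finset.range_add_one, Finset.set_biUnion_insert, Set.union_comm]
    rw [hcup, Set.ncard_union_eq ?hd ?h1 ?h2, ih (fun i hi => hfin i (hrr i hi))
      (fun i hi j hj hij => hdisj i (hrr i hi) j (hrr j hj) hij)]
    case hd =>
      rw [Set.disjoint_iUnion₂_left]
      intro i hi
      rw [Finset.mem_range] at hi
      exact hdisj i (by rw [Finset.mem_range]; omega) n (by rw [Finset.mem_range]; omega)
        (by omega)
    case h1 =>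
      exact Set.Finite.biUnion (Finset.range n).finite_toSet (fun i hi => hfin i (hrr i hi))
    case h2 => exact hfin n (by rw [Finset.mem_range]; omega)

end Aux4

section Aux5

open DGraph

variable {G : DGraph}

theorem vl_inj (w : G.DPath) (hnodup : w.vertexList.Nodup) {i j : ℕ}
    (hi : i ≤ w.edges.length) (hj : j ≤ w.edges.length)
    (h : G.walkEnd w.first (w.edges.take i) = G.walkEnd w.first (w.edges.take j)) : i = j := by
  rw [← vertexList_getD w i hi, ← vertexList_getD w j hj] at h
  have hi' : i < w.vertexList.length := by rw [vertexList_length]; omega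
  have hj' : j < w.vertexList.length := by rw [vertexList_length]; omega
  rw [List.getD_eq_get _ _ ⟨i, hi'⟩, List.getD_eq_get _ _ ⟨j, hj'⟩] at h
  have := List.nodup_iff_injective_get.mp hnodup h
  simpa using this

theorem map_sum_getD {α : Type} (l : List α) (f : α → ℕ) (d : α) :
    (l.map f).sum = ∑ k ∈ Finset.range l.length, f (l.getD k d) := by
  induction l with
  | nil => simp
  | cons a l ih =>
    rw [List.map_cons, List.sum_cons, ih, List.length_cons, Finset.sum_range_succ']
    simp only [List.getD_cons_succ, List.getD_cons_zero]
    omega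

end Aux5

open DGraph in
theorem stmt_15' (G : DGraph) [DecidableEq G.V] (w : G.DPath) (hfin : (cosets G (chainSet G w)).Finite) :
    (cosets G (chainSet G w)).ncard =
      ∑ v ∈ w.vertexList.toFinset, (Npaths G v w).ncard := by
  classical
  set n := w.edges.length with hn
  set P : Set G.DPath := {c : G.DPath | c.first = w.first} with hP
  have hPfin : P.Finite := by
    apply Set.Finite.of_finite_image _ (FF_injOn w)
    rw [← cosets_eq w]; exact hfin
  set PL : Set (List G.E) := {l : List G.E | G.IsWalk w.first l} with hPLdef
  have hPLeq : PL = DPath.edges '' P := by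
    ext l
    constructor
    · intro hl; exact ⟨⟨w.first, l, hl⟩, rfl, rfl⟩
    · rintro ⟨c, hc, rfl⟩
      have hc' : c.first = w.first := hc
      show G.IsWalk w.first c.edges
      rw [← hc']
      exact c.wf
  have hedgesInj : Set.InjOn DPath.edges P :=
    fun c1 h1 c2 h2 he => dpath_ext (Eq.trans h1 h2.symm) he
  have hPLfin : PL.Finite := by rw [hPLeq]; exact hPfin.image _
  have hnodup := nodup_of_finite w hPLfin
  set vl : ℕ → G.V := fun k => G.walkEnd w.first (w.edges.take k) with hvldef
  set NL : G.V → Set (List G.E) :=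
    fun v => {l | G.IsWalk v l ∧ ∀ e, l.head? = some e → e ∉ w.edges} with hNLdef
  set T : ℕ → Set (List G.E) := fun k => (fun l => w.edges.take k ++ l) '' NL (vl k) with hTdef
  have hwalk_take : ∀ k : ℕ, G.IsWalk w.first (w.edges.take k) := fun k => isWalk_take w.wf k
  have hTsub : ∀ k, T k ⊆ PL := by
    rintro k l ⟨t, ⟨htw, -⟩, rfl⟩
    rw [hPLdef, Set.mem_setOf_eq, G.isWalk_append]
    exact ⟨hwalk_take k, htw⟩
  have hcover : PL = ⋃ k ∈ Finset.range (n+1), T k := by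
    apply Set.Subset.antisymm
    · intro l hl
      set Q : ℕ → Prop := fun k => k ≤ l.length ∧ l.take k = w.edges.take k with hQdef
      set K : ℕ := Nat.findGreatest Q n with hKdef
      have hQ0 : Q 0 := ⟨Nat.zero_le _, rfl⟩
      have hQK : Q K := Nat.findGreatest_spec (Nat.zero_le n) hQ0
      have hKn : K ≤ n := Nat.findGreatest_le n
      have hlw : G.IsWalk w.first l := hl
      rw [Set.mem_iUnion₂]
      refine ⟨K, by rw [Finset.mem_range]; omega, ?_⟩
      refine ⟨l.drop K, ⟨?_, ?_⟩, ?_⟩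
      · have h2 := hlw
        rw [← List.take_append_drop K l, G.isWalk_append] at h2
        have := h2.2
        rw [hQK.2] at this
        exact this
      · intro e he hemem
        rw [List.head?_drop] at he
        obtain ⟨hKl, hlK⟩ := List.getElem?_eq_some_iff.mp he
        obtain ⟨j, hj, hje⟩ := List.mem_iff_getElem.mp hemem
        have hsrc1 : G.src e = vl K := by
          rw [← hlK, src_getElem hlw K hKl, hQK.2]
        have hsrc2 : G.src e = vl j := by
          rw [← hje, src_getElem w.wf j hj]
        obtain rfl : j = K := vl_inj w hnodup (by omega) (by omega) (hsrc2.symm.trans hsrc1)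
        have hQK1 : Q (K+1) := by
          constructor
          · omega
          · rw [List.take_succ, List.take_succ, hQK.2, he, List.getElem?_eq_getElem hj, hje]
        have := Nat.le_findGreatest (by omega : K + 1 ≤ n) hQK1
        omega
      · rw [← hQK.2]
        exact List.take_append_drop K l
    · intro l hl
      rw [Set.mem_iUnion₂] at hl
      obtain ⟨k, _, hlk⟩ := hl
      exact hTsub k hlk
  have hDhalf : ∀ i j : ℕ, i < j → j ≤ n → Disjoint (T i) (T j) := by
    intro i j hij hjn
    rw [Set.disjoint_left]
    rintro l ⟨t, ⟨htw, hth⟩, rfl⟩ ⟨t', ⟨ht'w, hth'⟩, heq⟩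
    have hti : (w.edges.take i).length = i := by
      rw [List.length_take]; omega
    have htj : (w.edges.take j).length = j := by
      rw [List.length_take]; omega
    have hi_lt : i < (w.edges.take j).length := by omega
    have hlen : i < (w.edges.take j ++ t').length := by
      rw [List.length_append]; omega
    have he1 : (w.edges.take j ++ t')[i]'hlen = w.edges[i]'(by omega) := by
      rw [List.getElem_append_left hi_lt, List.getElem_take]
    have hbeta : w.edges.take j ++ t' = w.edges.take i ++ t := heq
    have hheadt : t.head? = some (w.edges[i]'(by omega)) := by
      have h1 : t = (w.edges.take i ++ t).drop i := by
        have h2 := (List.drop_left (l₁ := w.edges.take i) (l₂ := t)).symm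
        rw [hti] at h2
        exact h2
      rw [h1, ← hbeta, List.head?_drop, List.getElem?_eq_getElem hlen, he1]
    exact hth _ hheadt (List.getElem_mem (by omega))
  have hdisj : ∀ i ∈ Finset.range (n+1), ∀ j ∈ Finset.range (n+1), i ≠ j →
      Disjoint (T i) (T j) := by
    intro i hi j hj hne
    rw [Finset.mem_range] at hi hj
    rcases Nat.lt_or_ge i j with h | h
    · exact hDhalf i j h (by omega)
    · exact (hDhalf j i (by omega) (by omega)).symm
  have hTcard : ∀ k, (T k).ncard = (NL (vl k)).ncard := by
    intro k
    apply Set.ncard_image_of_injOn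
    intro a _ b _ h
    exact List.append_cancel_left h
  have hNcard : ∀ v : G.V, (NL v).ncard = (Npaths G v w).ncard := by
    intro v
    have hNLeq : NL v = DPath.edges '' Npaths G v w := by
      ext l
      constructor
      · rintro ⟨hw', hh⟩
        exact ⟨⟨v, l, hw'⟩, ⟨rfl, hh⟩, rfl⟩
      · rintro ⟨t, ⟨ht1, ht2⟩, rfl⟩
        exact ⟨ht1 ▸ t.wf, ht2⟩
    rw [hNLeq]
    apply Set.ncard_image_of_injOn
    intro t1 h1 t2 h2 he
    exact dpath_ext (h1.1.trans h2.1.symm) he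
  have lhs_eq : (cosets G (chainSet G w)).ncard
      = ∑ k ∈ Finset.range (n+1), (Npaths G (vl k) w).ncard := by
    rw [cosets_eq w, Set.ncard_image_of_injOn (FF_injOn w)]
    have h1 : P.ncard = PL.ncard := by rw [hPLeq, Set.ncard_image_of_injOn hedgesInj]
    rw [← hP, h1, hcover, ncard_biUnion_range (n+1) T
      (fun i _ => Set.Finite.subset hPLfin (hTsub i)) hdisj]
    exact Finset.sum_congr rfl (fun k _ => by rw [hTcard, hNcard])
  rw [lhs_eq, List.sum_toFinset _ hnodup,
    map_sum_getD w.vertexList (fun v => (Npaths G v w).ncard) w.first, vertexList_length]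
  apply Finset.sum_congr rfl
  intro k hk
  rw [Finset.mem_range] at hk
  rw [vertexList_getD w k (by omega)]

/-- if `L = ↑{(w,w)}` has finite index in `S(Γ)`, then the index is
the sum, over the vertices `v` of `w`, of the number of paths starting at `v` whose
first edge is not an edge of `w`. -/
theorem stmt_15 (G : DGraph) [Fintype G.V] [Fintype G.E] [DecidableEq G.V]
    (w : G.DPath) (hfin : (cosets G (chainSet G w)).Finite) :
    (cosets G (chainSet G w)).ncard =
      ∑ v ∈ w.vertexList.toFinset, (Npaths G v w).ncard :=
  stmt_15' G w hfin
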